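/- Let ħ, m > 0, n > 0, t ∈ ℝ, K ∈ ℝ², and γ > 1. Then ℰ_γ is unbounded from below: for every M ∈ ℝ there exists q ∈ ℝ² with ℰ_γ(q) < M. Hence beyond the critical coupling γ_c = 1 the coupled electron–photon system has no ground state; since omitting the diamagnetic A² term replaces the bounded coupling γ = ω_p²/(ω² + ω_p²) ≤ 1 by γ′ = ω_p²/ω², which has no upper bound, the free electron gas coupled to a cavity without the A² term is unstable and has no ground state for sufficiently large electron density. -/

import Mathlib

open scoped RealInnerProductSpace

/-- Beyond the critical coupling, `γ > 1`, the energy density of the 2D free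
electron gas coupled to a cavity mode is unbounded from below, so the coupled
electron–photon system has no ground state. Since omitting the diamagnetic A²
term replaces the bounded coupling `γ ≤ 1` by an unbounded one, the electron
gas in a cavity without the A² term is unstable for large enough density. -/
theorem no_ground_state_beyond_critical_coupling
    (ℏ m n t : ℝ) (hℏ : 0 < ℏ) (hm : 0 < m) (hn : 0 < n)
    (K : EuclideanSpace ℝ (Fin 2)) (γ : ℝ) (hγ : 1 < γ) :
    ∀ M : ℝ, ∃ q : EuclideanSpace ℝ (Fin 2),
      ℏ ^ 2 / (2 * m) * (t + 2 * ⟪q, K⟫ + n * ‖q‖ ^ 2 - γ / n * ‖K + n • q‖ ^ 2) < M := by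
  intro M
  set e : EuclideanSpace ℝ (Fin 2) := EuclideanSpace.single (0 : Fin 2) (1 : ℝ) with he
  have hne : ‖e‖ = 1 := by simp [he]
  set c : ℝ := ⟪K, e⟫ with hc
  set h : ℝ := ℏ ^ 2 / (2 * m) with hh
  have hh0 : 0 < h := by positivity
  set A : ℝ := t - γ / n * ‖K‖ ^ 2 with hA
  set B : ℝ := 2 * c - 2 * γ * c with hB
  set C : ℝ := n - γ * n with hC
  have hC0 : C < 0 := by nlinarith
  -- the quadratic tends to -∞
  have h1 : Filter.Tendsto (fun s : ℝ => B + C * s) Filter.atTop Filter.atBot := by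
    apply Filter.tendsto_atBot_add_const_left
    exact (Filter.tendsto_const_mul_atBot_of_neg hC0).mpr Filter.tendsto_id
  have h2 : Filter.Tendsto (fun s : ℝ => s * (B + C * s)) Filter.atTop Filter.atBot :=
    Filter.Tendsto.atTop_mul_atBot₀ Filter.tendsto_id h1
  have h3 : Filter.Tendsto (fun s : ℝ => h * (A + s * (B + C * s))) Filter.atTop Filter.atBot := by
    have := Filter.tendsto_atBot_add_const_left _ A h2
    exact Filter.Tendsto.const_mul_atBot hh0 this
  obtain ⟨s, hs⟩ := (h3.eventually (Filter.eventually_lt_atBot M)).exists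
  refine ⟨s • e, ?_⟩
  have hq1 : ⟪s • e, K⟫ = s * c := by
    rw [real_inner_smul_left, real_inner_comm]
  have hq2 : ‖s • e‖ ^ 2 = s ^ 2 := by
    rw [norm_smul, hne]
    simp [sq_abs]
  have hq3 : ‖K + n • s • e‖ ^ 2 = ‖K‖ ^ 2 + 2 * (n * s * c) + n ^ 2 * s ^ 2 := by
    rw [smul_smul, norm_add_sq_real, real_inner_smul_right, norm_smul]
    rw [hne]
    ring_nf
    rw [Real.norm_eq_abs, sq_abs]
    ring
  rw [hq1, hq2, hq3]
  have : t + 2 * (s * c) + n * s ^ 2 - γ / n * (‖K‖ ^ 2 + 2 * (n * s * c) + n ^ 2 * s ^ 2)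
      = A + s * (B + C * s) := by
    rw [hA, hB, hC]
    field_simp
    ring
  rw [this]
  exact hs
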